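/- Let B be a real p×q matrix with p ≥ q ≥ 1 and n ≥ 1, and suppose B has full column rank (rank B = q, equivalently Bᵀ has full row rank). Then X^{p−q} divides the characteristic polynomial of C, and (X − (n−1))^{p−q} divides the characteristic polynomial of D; that is, C has 0 as an eigenvalue with algebraic multiplicity at least p − q, and D has n − 1 as an eigenvalue with algebraic multiplicity at least p − q. -/

import Mathlib

open Matrix

/-- The matrix `C` of Construction III: indexed by `Fin p ⊕ (Fin n × Fin q)`,
first block row `[0, B, …, B]`, and the `n×n` grid of `q×q` blocks has zero diagonal blocks
and identity blocks `I_q` off the diagonal. -/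
def matC3 (p q n : ℕ) (B : Matrix (Fin p) (Fin q) ℝ) :
    Matrix (Fin p ⊕ Fin n × Fin q) (Fin p ⊕ Fin n × Fin q) ℝ :=
  Matrix.of fun a b =>
    match a, b with
    | Sum.inl i, Sum.inr (_, j) => B i j
    | Sum.inr (_, j), Sum.inl i => B i j
    | Sum.inr (k, j), Sum.inr (k', j') => if k ≠ k' ∧ j = j' then 1 else 0
    | _, _ => 0

/-- The matrix `D` of Construction III: indexed by `Fin q ⊕ (Fin n × Fin p)`,
first block row `[0, Bᵀ, …, Bᵀ]`, and the `n×n` grid of `p×p` blocks has zero diagonal blocks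
and identity blocks `I_p` off the diagonal. -/
def matD3 (p q n : ℕ) (B : Matrix (Fin p) (Fin q) ℝ) :
    Matrix (Fin q ⊕ Fin n × Fin p) (Fin q ⊕ Fin n × Fin p) ℝ :=
  Matrix.of fun a b =>
    match a, b with
    | Sum.inl j, Sum.inr (_, i) => B i j
    | Sum.inr (_, i), Sum.inl j => B i j
    | Sum.inr (k, i), Sum.inr (k', i') => if k ≠ k' ∧ i = i' then 1 else 0
    | _, _ => 0

section Aux

open Polynomial Module

lemma aux_charpoly_shift {ι : Type*} [Fintype ι] [DecidableEq ι] (M : Matrix ι ι ℝ) (μ : ℝ) :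
    (M - μ • 1).charpoly = M.charpoly.comp (X + C μ) := by
  let φ : ℝ[X] →+* ℝ[X] := (Polynomial.aeval (X + C μ : ℝ[X])).toRingHom
  have hφ : ∀ p : ℝ[X], φ p = p.comp (X + C μ) := fun p => by
    simp [φ, Polynomial.aeval_def, Polynomial.comp, Polynomial.algebraMap_eq]
  rw [← hφ, Matrix.charpoly, Matrix.charpoly, RingHom.map_det]
  congr 1
  ext i j
  by_cases h : i = j
  · subst h
    simp only [RingHom.mapMatrix_apply, Matrix.map_apply, charmatrix_apply_eq]
    rw [hφ]
    simp only [sub_comp, X_comp, C_comp, Matrix.sub_apply, Matrix.smul_apply,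
      Matrix.one_apply_eq, smul_eq_mul, mul_one, map_sub]
    ring
  · simp only [RingHom.mapMatrix_apply, Matrix.map_apply, charmatrix_apply_ne _ _ _ h]
    rw [hφ]
    simp [Matrix.one_apply_ne h]

lemma aux_mulVecLin_charpoly {ι : Type*} [Fintype ι] [DecidableEq ι] (M : Matrix ι ι ℝ) :
    (M.mulVecLin).charpoly = M.charpoly := by
  rw [← Matrix.toLin'_apply', ← Matrix.toLin_eq_toLin',
    ← LinearMap.charpoly_toMatrix (Matrix.toLin (Pi.basisFun ℝ ι) (Pi.basisFun ℝ ι) M)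
      (Pi.basisFun ℝ ι), LinearMap.toMatrix_toLin]

/-- Key lemma: geometric multiplicity bounds algebraic multiplicity. -/
lemma aux_pow_dvd_charpoly {ι : Type*} [Fintype ι] [DecidableEq ι] (M : Matrix ι ι ℝ) (μ : ℝ)
    (d : ℕ) (hd : d ≤ finrank ℝ (LinearMap.ker (M - μ • 1).mulVecLin)) :
    (X - C μ) ^ d ∣ M.charpoly := by
  set N := M - μ • 1 with hN
  have hker : LinearMap.ker N.mulVecLin ≤
      Module.End.maxGenEigenspace (N.mulVecLin : Module.End ℝ (ι → ℝ)) 0 := by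
    intro x hx
    rw [Module.End.mem_maxGenEigenspace]
    refine ⟨1, ?_⟩
    simpa using LinearMap.mem_ker.mp hx
  have hle : d ≤ (N.mulVecLin : Module.End ℝ (ι → ℝ)).charpoly.natTrailingDegree := by
    rw [← LinearMap.finrank_maxGenEigenspace_zero_eq]
    exact hd.trans (Submodule.finrank_mono hker)
  have hXdvd : X ^ d ∣ N.charpoly := by
    rw [← aux_mulVecLin_charpoly]
    rw [Polynomial.X_pow_dvd_iff]
    intro e he
    exact Polynomial.coeff_eq_zero_of_lt_natTrailingDegree (lt_of_lt_of_le he hle)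
  have hM : M.charpoly = N.charpoly.comp (X - C μ) := by
    rw [hN, aux_charpoly_shift, Polynomial.comp_assoc]
    simp
  obtain ⟨c, hc⟩ := hXdvd
  rw [hM, hc, Polynomial.mul_comp, Polynomial.pow_comp, Polynomial.X_comp]
  exact Dvd.intro _ rfl

lemma aux_finrank_ker {p q : ℕ} (B : Matrix (Fin p) (Fin q) ℝ) (hrank : B.rank = q) :
    finrank ℝ (LinearMap.ker Bᵀ.mulVecLin) = p - q := by
  have h1 := LinearMap.finrank_range_add_finrank_ker (Bᵀ.mulVecLin)
  have h2 : finrank ℝ (LinearMap.range Bᵀ.mulVecLin) = q := by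
    rw [← Matrix.rank, Matrix.rank_transpose, hrank]
  rw [h2, Module.finrank_fintype_fun_eq_card, Fintype.card_fin] at h1
  omega

/-- extension by zero into the first block -/
def auxL1 (p q n : ℕ) : (Fin p → ℝ) →ₗ[ℝ] (Fin p ⊕ Fin n × Fin q → ℝ) where
  toFun x := Sum.elim x 0
  map_add' x y := by funext a; cases a <;> simp
  map_smul' c x := by funext a; cases a <;> simp

/-- diagonal embedding into the second block -/
def auxL2 (p q n : ℕ) : (Fin p → ℝ) →ₗ[ℝ] (Fin q ⊕ Fin n × Fin p → ℝ) where
  toFun x := Sum.elim 0 (fun z => x z.2)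
  map_add' x y := by funext a; cases a <;> simp
  map_smul' c x := by funext a; cases a <;> simp

end Aux

/-- If `B` has full column rank, then `C` has `0` as an eigenvalue with algebraic multiplicity
at least `p − q`, and `D` has `n − 1` as an eigenvalue with algebraic multiplicity at least
`p − q`. -/
theorem full_rank_eigenvalue_multiplicity (p q n : ℕ) (hq : 1 ≤ q) (hpq : q ≤ p) (hn : 1 ≤ n)
    (B : Matrix (Fin p) (Fin q) ℝ) (hrank : B.rank = q) :
    Polynomial.X ^ (p - q) ∣ (matC3 p q n B).charpoly ∧
      (Polynomial.X - Polynomial.C ((n : ℝ) - 1)) ^ (p - q) ∣ (matD3 p q n B).charpoly := by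
  open Polynomial Module in
  constructor
  · have key := aux_pow_dvd_charpoly (matC3 p q n B) 0 (p - q) ?_
    · simpa using key
    rw [zero_smul, sub_zero]
    have hf : Function.Injective (auxL1 p q n) := by
      intro x y h
      funext i
      exact congrFun h (Sum.inl i)
    have hsub : (LinearMap.ker Bᵀ.mulVecLin).map (auxL1 p q n) ≤
        LinearMap.ker (matC3 p q n B).mulVecLin := by
      rintro _ ⟨x, hx, rfl⟩
      have hx' : Bᵀ *ᵥ x = 0 := LinearMap.mem_ker.mp hx
      rw [LinearMap.mem_ker, Matrix.mulVecLin_apply]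
      funext a
      cases a with
      | inl i =>
        simp [matC3, Matrix.mulVec, dotProduct, Fintype.sum_sum_type, auxL1]
      | inr z =>
        obtain ⟨k, j⟩ := z
        have hxj := congrFun hx' j
        simp only [Matrix.mulVec, dotProduct, Matrix.transpose_apply, Pi.zero_apply] at hxj
        simp only [matC3, Matrix.mulVec, dotProduct, Fintype.sum_sum_type, auxL1,
          Matrix.of_apply, LinearMap.coe_mk, AddHom.coe_mk, Sum.elim_inl, Sum.elim_inr,
          Pi.zero_apply, mul_zero, Finset.sum_const_zero, add_zero]
        exact hxj
    calc p - q = finrank ℝ (LinearMap.ker Bᵀ.mulVecLin) := (aux_finrank_ker B hrank).symm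
      _ = finrank ℝ ((LinearMap.ker Bᵀ.mulVecLin).map (auxL1 p q n)) :=
          LinearEquiv.finrank_eq (Submodule.equivMapOfInjective _ hf _)
      _ ≤ finrank ℝ (LinearMap.ker (matC3 p q n B).mulVecLin) := Submodule.finrank_mono hsub
  · apply aux_pow_dvd_charpoly (matD3 p q n B) ((n : ℝ) - 1) (p - q)
    have hf : Function.Injective (auxL2 p q n) := by
      intro x y h
      funext i
      exact congrFun h (Sum.inr (⟨0, hn⟩, i))
    have hsub : (LinearMap.ker Bᵀ.mulVecLin).map (auxL2 p q n) ≤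
        LinearMap.ker (matD3 p q n B - ((n : ℝ) - 1) • 1).mulVecLin := by
      rintro _ ⟨x, hx, rfl⟩
      have hx' : Bᵀ *ᵥ x = 0 := LinearMap.mem_ker.mp hx
      rw [LinearMap.mem_ker, Matrix.mulVecLin_apply, Matrix.sub_mulVec,
        Matrix.smul_mulVec, Matrix.one_mulVec]
      funext a
      cases a with
      | inl j =>
        have hxj := congrFun hx' j
        simp only [Matrix.mulVec, dotProduct, Matrix.transpose_apply, Pi.zero_apply] at hxj
        simp only [matD3, Matrix.mulVec, dotProduct, Fintype.sum_sum_type,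
          Fintype.sum_prod_type, auxL2, Matrix.of_apply, LinearMap.coe_mk, AddHom.coe_mk,
          Sum.elim_inl, Sum.elim_inr, Pi.zero_apply, mul_zero, Finset.sum_const_zero,
          zero_add, Pi.sub_apply, Pi.smul_apply, smul_eq_mul, smul_zero, sub_zero]
        rw [Finset.sum_congr rfl (fun k _ => hxj)]
        simp
      | inr z =>
        obtain ⟨k, i⟩ := z
        simp only [matD3, Matrix.mulVec, dotProduct, Fintype.sum_sum_type,
          Fintype.sum_prod_type, auxL2, Matrix.of_apply, LinearMap.coe_mk, AddHom.coe_mk,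
          Sum.elim_inl, Sum.elim_inr, Pi.zero_apply, mul_zero, Finset.sum_const_zero,
          zero_add, Pi.sub_apply, Pi.smul_apply, smul_eq_mul, ite_mul, one_mul, zero_mul,
          ite_and]
        have hrow : ∀ k' : Fin n,
            (∑ i' : Fin p, if k ≠ k' then if i = i' then x i' else 0 else 0)
              = x i - (if k = k' then x i else 0) := by
          intro k'
          by_cases h : k = k'
          · simp [h]
          · simp [h, Finset.sum_ite_eq]
        rw [Finset.sum_congr rfl (fun k' _ => hrow k'), Finset.sum_sub_distrib,
          Finset.sum_const, Finset.sum_ite_eq, Finset.card_univ, Fintype.card_fin]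
        simp only [Finset.mem_univ, if_true, nsmul_eq_mul]
        ring
    calc p - q = finrank ℝ (LinearMap.ker Bᵀ.mulVecLin) := (aux_finrank_ker B hrank).symm
      _ = finrank ℝ ((LinearMap.ker Bᵀ.mulVecLin).map (auxL2 p q n)) :=
          LinearEquiv.finrank_eq (Submodule.equivMapOfInjective _ hf _)
      _ ≤ _ := Submodule.finrank_mono hsub
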